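/- Let n ≥ 2 and f ∈ Aut(nK_ω). If f is stabilizing, then D_f (the set of g such that ⟨f,g⟩ is dense in Aut(nK_ω)) is not dense in A_f; in particular D_f ∩ A_f is not comeagre in A_f. -/

import Mathlib

open Topology

/-- The pointwise-convergence (permutation) topology on the automorphism group. -/
def autTop {V : Type*} (G : SimpleGraph V) : TopologicalSpace (G ≃g G) :=
  TopologicalSpace.induced (fun g (x : V) => g x)
    (@Pi.topologicalSpace V (fun _ => V) (fun _ => ⊥))

/-- nK_ω: the disjoint union of n copies of the countably infinite complete graph. -/
def nKomega (n : ℕ) : SimpleGraph (Fin n × ℕ) :=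
  SimpleGraph.fromRel (fun u v => u.1 = v.1)

/-- g ∈ A_f: the induced permutations f̄, ḡ generate the full symmetric group S_n. -/
def AfMem (n : ℕ) (f g : nKomega n ≃g nKomega n) : Prop :=
  ∀ σ : Equiv.Perm (Fin n),
    ∃ h ∈ Subgroup.closure ({f.toEquiv, g.toEquiv} : Set (Equiv.Perm (Fin n × ℕ))),
      ∀ x : Fin n × ℕ, (h x).1 = σ x.1

/-- f is non-stabilizing. -/
def NonStabilizing (n : ℕ) (f : nKomega n ≃g nKomega n) : Prop :=
  ∀ Γ : Set (Fin n × ℕ), Γ ≠ Set.univ → ∀ x ∈ Γ,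
    ∀ (s : Finset (Fin n × ℕ)) (φ : Fin n × ℕ → Fin n × ℕ),
      (∃ g₀ : nKomega n ≃g nKomega n, (∀ z ∈ s, g₀ z = φ z) ∧ AfMem n f g₀) →
      ∃ g : nKomega n ≃g nKomega n, (∀ z ∈ s, g z = φ z) ∧ AfMem n f g ∧
        ∃ h ∈ Subgroup.closure ({f.toEquiv, g.toEquiv} : Set (Equiv.Perm (Fin n × ℕ))),
          h x ∉ Γ

def swapAut (n : ℕ) (x y : Fin n × ℕ) : nKomega n ≃g nKomega n where
  toEquiv := Equiv.prodCongr (Equiv.swap x.1 y.1) (Equiv.swap x.2 y.2)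
  map_rel_iff' := by
    intro a b
    simp [nKomega, SimpleGraph.fromRel_adj, Equiv.prodCongr_apply, Prod.ext_iff,
      Equiv.swap_apply_eq_iff, eq_comm]

theorem comp_const (n : ℕ) (g : nKomega n ≃g nKomega n) (x : Fin n × ℕ) :
    (g x).1 = (g (x.1, 0)).1 := by
  rcases x with ⟨i, m⟩
  rcases eq_or_ne m 0 with rfl | hm
  · rfl
  · have hadj : (nKomega n).Adj (i, m) (i, 0) := by
      simp [nKomega, SimpleGraph.fromRel_adj, hm, Prod.ext_iff]
    have := g.map_rel_iff.mpr hadj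
    simp only [nKomega, SimpleGraph.fromRel_adj] at this
    rcases this.2 with h | h
    · exact h
    · exact h.symm

def bar (n : ℕ) (g : nKomega n ≃g nKomega n) : Equiv.Perm (Fin n) where
  toFun i := (g (i, 0)).1
  invFun i := (g.symm (i, 0)).1
  left_inv i := by
    have := comp_const n g.symm (g (i, 0))
    simp at this
    exact this.symm
  right_inv i := by
    have := comp_const n g (g.symm (i, 0))
    simp at this
    exact this.symm

theorem bar_spec (n : ℕ) (g : nKomega n ≃g nKomega n) (x : Fin n × ℕ) :
    (g x).1 = bar n g x.1 := comp_const n g x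

theorem closure_bar (n : ℕ) (f g : nKomega n ≃g nKomega n) :
    ∀ h ∈ Subgroup.closure ({f.toEquiv, g.toEquiv} : Set (Equiv.Perm (Fin n × ℕ))),
      ∃ τ ∈ Subgroup.closure ({bar n f, bar n g} : Set (Equiv.Perm (Fin n))),
        ∀ x : Fin n × ℕ, (h x).1 = τ x.1 := by
  intro h hh
  induction hh using Subgroup.closure_induction with
  | mem x hx =>
    rcases hx with rfl | rfl
    · exact ⟨bar n f, Subgroup.subset_closure (by simp), fun x => bar_spec n f x⟩
    · exact ⟨bar n g, Subgroup.subset_closure (by simp), fun x => bar_spec n g x⟩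
  | one => exact ⟨1, one_mem _, fun x => rfl⟩
  | mul a b ha hb iha ihb =>
    obtain ⟨τa, hτa, ha'⟩ := iha
    obtain ⟨τb, hτb, hb'⟩ := ihb
    refine ⟨τa * τb, mul_mem hτa hτb, fun x => ?_⟩
    simp only [Equiv.Perm.mul_apply]
    rw [ha', hb']
  | inv a ha iha =>
    obtain ⟨τ, hτ, ha'⟩ := iha
    refine ⟨τ⁻¹, inv_mem hτ, fun x => ?_⟩
    have := ha' (a⁻¹ x)
    simp at this
    rw [this]
    simp

theorem bar_closure (n : ℕ) (f g : nKomega n ≃g nKomega n) :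
    ∀ τ ∈ Subgroup.closure ({bar n f, bar n g} : Set (Equiv.Perm (Fin n))),
      ∃ h ∈ Subgroup.closure ({f.toEquiv, g.toEquiv} : Set (Equiv.Perm (Fin n × ℕ))),
        ∀ x : Fin n × ℕ, (h x).1 = τ x.1 := by
  intro τ hτ
  induction hτ using Subgroup.closure_induction with
  | mem x hx =>
    rcases hx with rfl | rfl
    · exact ⟨f.toEquiv, Subgroup.subset_closure (by simp), fun x => bar_spec n f x⟩
    · exact ⟨g.toEquiv, Subgroup.subset_closure (by simp), fun x => bar_spec n g x⟩
  | one => exact ⟨1, one_mem _, fun x => rfl⟩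
  | mul a b ha hb iha ihb =>
    obtain ⟨ha', hha, ha''⟩ := iha
    obtain ⟨hb', hhb, hb''⟩ := ihb
    refine ⟨ha' * hb', mul_mem hha hhb, fun x => ?_⟩
    simp only [Equiv.Perm.mul_apply]
    rw [ha'', hb'']
  | inv a ha iha =>
    obtain ⟨h', hh, h''⟩ := iha
    refine ⟨h'⁻¹, inv_mem hh, fun x => ?_⟩
    have := h'' (h'⁻¹ x)
    simp at this
    rw [this]
    simp

theorem afMem_iff (n : ℕ) (f g : nKomega n ≃g nKomega n) :
    AfMem n f g ↔
      Subgroup.closure ({bar n f, bar n g} : Set (Equiv.Perm (Fin n))) = ⊤ := by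
  constructor
  · intro H
    rw [eq_top_iff]
    intro σ _
    obtain ⟨h, hh, hσ⟩ := H σ
    obtain ⟨τ, hτ, hτ'⟩ := closure_bar n f g h hh
    have : σ = τ := by
      ext i
      rw [← hσ (i, 0), hτ' (i, 0)]
    exact this ▸ hτ
  · intro H σ
    exact bar_closure n f g σ (H ▸ Subgroup.mem_top σ)

theorem agree_open {V : Type*} (G : SimpleGraph V) (s : Finset V) (φ : V → V) :
    IsOpen[autTop G] {g : G ≃g G | ∀ z ∈ s, g z = φ z} := by
  letI : TopologicalSpace V := ⊥
  haveI : DiscreteTopology V := ⟨rfl⟩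
  letI := autTop G
  refine isOpen_induced_iff.mpr ⟨(↑s : Set V).pi (fun z => {φ z}), ?_, ?_⟩
  · exact isOpen_set_pi s.finite_toSet (fun z _ => isOpen_discrete _)
  · ext g; simp [Set.mem_pi]

abbrev FProd (n : ℕ) : Type :=
  ((Fin n × ℕ) → (Fin n × ℕ)) × ((Fin n × ℕ) → (Fin n × ℕ))

theorem baire_Af (n : ℕ) (f : nKomega n ≃g nKomega n) :
    letI := autTop (nKomega n)
    BaireSpace {g : nKomega n ≃g nKomega n // AfMem n f g} := by
  letI tV : TopologicalSpace (Fin n × ℕ) := ⊥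
  haveI : DiscreteTopology (Fin n × ℕ) := ⟨rfl⟩
  letI tA := autTop (nKomega n)
  letI tPi : TopologicalSpace ((Fin n × ℕ) → (Fin n × ℕ)) := Pi.topologicalSpace
  set T := {g : nKomega n ≃g nKomega n // AfMem n f g}
  set e : T → ((Fin n × ℕ) → (Fin n × ℕ)) × ((Fin n × ℕ) → (Fin n × ℕ)) :=
    fun g => (fun x => g.1 x, fun x => g.1.symm x) with he
  -- e is a closed embedding
  have hsnd : Continuous (fun g : T => fun x => g.1.symm x) := by
    refine continuous_pi fun x => ?_
    refine continuous_discrete_rng.mpr fun y => ?_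
    have : (fun g : T => g.1.symm x) ⁻¹' {y} = {g : T | ∀ z ∈ ({y} : Finset (Fin n × ℕ)),
        g.1 z = (fun _ => x) z} := by
      ext g
      simp only [Set.mem_preimage, Set.mem_singleton_iff, Set.mem_setOf_eq,
        Finset.mem_singleton, forall_eq]
      constructor
      · intro h; rw [← h]; simp
      · intro h; rw [← h]; simp
    rw [this]
    exact (agree_open (nKomega n) {y} (fun _ => x)).preimage continuous_subtype_val
  have hemb : Topology.IsClosedEmbedding e := by
    refine ⟨⟨⟨?_⟩, ?_⟩, ?_⟩
    · refine le_antisymm ?_ ?_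
      · rw [← continuous_iff_le_induced]
        exact Continuous.prodMk
          (continuous_induced_dom.comp continuous_subtype_val) hsnd
      · calc TopologicalSpace.induced e instTopologicalSpaceProd
            ≤ TopologicalSpace.induced e
              (TopologicalSpace.induced Prod.fst tPi) := induced_mono inf_le_left
          _ = TopologicalSpace.induced (Prod.fst ∘ e) tPi := induced_compose
          _ = instTopologicalSpaceSubtype := by
            exact (induced_compose (f := (Subtype.val : T → nKomega n ≃g nKomega n))
              (g := fun g (x : Fin n × ℕ) => g x)).symm
    · intro a b hab
      have h1 : ∀ x, a.1 x = b.1 x := fun x => congrFun (congrArg Prod.fst hab) x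
      exact Subtype.ext (DFunLike.ext _ _ h1)
    · -- closed range
      classical
      have cont1 : ∀ x : Fin n × ℕ, Continuous (fun p : FProd n => p.1 x) :=
        fun x => (continuous_apply x).comp continuous_fst
      have cont2 : ∀ x : Fin n × ℕ, Continuous (fun p : FProd n => p.2 x) :=
        fun x => (continuous_apply x).comp continuous_snd
      have hrange : Set.range e =
          {p : FProd n |
            (∀ x, p.2 (p.1 x) = x) ∧ (∀ x, p.1 (p.2 x) = x) ∧
            (∀ a b, (nKomega n).Adj a b → (nKomega n).Adj (p.1 a) (p.1 b)) ∧
            (∀ a b, (nKomega n).Adj a b → (nKomega n).Adj (p.2 a) (p.2 b)) ∧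
            (∃ τ : Equiv.Perm (Fin n), (∀ i, (p.1 (i, 0)).1 = τ i) ∧
              Subgroup.closure ({bar n f, τ} : Set (Equiv.Perm (Fin n))) = ⊤)} := by
        ext p
        constructor
        · rintro ⟨g, rfl⟩
          refine ⟨fun x => g.1.symm_apply_apply x, fun x => g.1.apply_symm_apply x,
            fun a b h => g.1.map_rel_iff.mpr h,
            fun a b h => g.1.symm.map_rel_iff.mpr h,
            bar n g.1, fun i => rfl, (afMem_iff n f g.1).mp g.2⟩
        · rintro ⟨h1, h2, h3, h4, τ, hτ, hτtop⟩
          have hrel : ∀ a b, (nKomega n).Adj (p.1 a) (p.1 b) ↔ (nKomega n).Adj a b := by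
            intro a b
            constructor
            · intro h
              have h' := h4 _ _ h
              rw [h1, h1] at h'
              exact h'
            · exact h3 a b
          let G : nKomega n ≃g nKomega n :=
            { toFun := p.1, invFun := p.2, left_inv := h1, right_inv := h2,
              map_rel_iff' := @fun a b => hrel a b }
          have hbarG : bar n G = τ := Equiv.ext fun i => hτ i
          have hAf : AfMem n f G := (afMem_iff n f G).mpr (by rw [hbarG]; exact hτtop)
          exact ⟨⟨G, hAf⟩, rfl⟩
      rw [hrange]
      simp only [Set.setOf_and]
      refine IsClosed.inter ?_ (IsClosed.inter ?_ (IsClosed.inter ?_ (IsClosed.inter ?_ ?_)))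
      · have : {p : FProd n | ∀ x, p.2 (p.1 x) = x} =
            ⋂ x, ⋂ v, {p : FProd n | p.1 x = v}ᶜ ∪ {p : FProd n | p.2 v = x} := by
          ext p
          simp only [Set.mem_iInter, Set.mem_union, Set.mem_compl_iff, Set.mem_setOf_eq]
          constructor
          · intro H x v
            rcases eq_or_ne (p.1 x) v with rfl | hne
            · exact Or.inr (H x)
            · exact Or.inl hne
          · intro H x
            rcases H x (p.1 x) with h | h
            · exact absurd rfl h
            · exact h
        rw [this]
        refine isClosed_iInter fun x => isClosed_iInter fun v => IsClosed.union ?_ ?_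
        · exact (IsOpen.preimage (cont1 x) (isOpen_discrete {v})).isClosed_compl
        · exact (isClosed_discrete {x}).preimage (cont2 v)
      · have : {p : FProd n | ∀ x, p.1 (p.2 x) = x} =
            ⋂ x, ⋂ v, {p : FProd n | p.2 x = v}ᶜ ∪ {p : FProd n | p.1 v = x} := by
          ext p
          simp only [Set.mem_iInter, Set.mem_union, Set.mem_compl_iff, Set.mem_setOf_eq]
          constructor
          · intro H x v
            rcases eq_or_ne (p.2 x) v with rfl | hne
            · exact Or.inr (H x)
            · exact Or.inl hne
          · intro H x
            rcases H x (p.2 x) with h | h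
            · exact absurd rfl h
            · exact h
        rw [this]
        refine isClosed_iInter fun x => isClosed_iInter fun v => IsClosed.union ?_ ?_
        · exact (IsOpen.preimage (cont2 x) (isOpen_discrete {v})).isClosed_compl
        · exact (isClosed_discrete {x}).preimage (cont1 v)
      · have : {p : FProd n | ∀ a b, (nKomega n).Adj a b → (nKomega n).Adj (p.1 a) (p.1 b)} =
            ⋂ a, ⋂ b, ⋂ (_ : (nKomega n).Adj a b),
              (fun p : FProd n => (p.1 a, p.1 b)) ⁻¹' {q | (nKomega n).Adj q.1 q.2} := by
          ext p
          simp only [Set.mem_iInter, Set.mem_preimage, Set.mem_setOf_eq]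
        rw [this]
        exact isClosed_iInter fun a => isClosed_iInter fun b => isClosed_iInter fun _ =>
          (isClosed_discrete _).preimage ((cont1 a).prodMk (cont1 b))
      · have : {p : FProd n | ∀ a b, (nKomega n).Adj a b → (nKomega n).Adj (p.2 a) (p.2 b)} =
            ⋂ a, ⋂ b, ⋂ (_ : (nKomega n).Adj a b),
              (fun p : FProd n => (p.2 a, p.2 b)) ⁻¹' {q | (nKomega n).Adj q.1 q.2} := by
          ext p
          simp only [Set.mem_iInter, Set.mem_preimage, Set.mem_setOf_eq]
        rw [this]
        exact isClosed_iInter fun a => isClosed_iInter fun b => isClosed_iInter fun _ =>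
          (isClosed_discrete _).preimage ((cont2 a).prodMk (cont2 b))
      · have : {p : FProd n | ∃ τ : Equiv.Perm (Fin n), (∀ i, (p.1 (i, 0)).1 = τ i) ∧
            Subgroup.closure ({bar n f, τ} : Set (Equiv.Perm (Fin n))) = ⊤} =
            ⋃ τ ∈ {τ : Equiv.Perm (Fin n) |
              Subgroup.closure ({bar n f, τ} : Set (Equiv.Perm (Fin n))) = ⊤},
              ⋂ i, (fun p : FProd n => p.1 (i, 0)) ⁻¹' {v | v.1 = τ i} := by
          ext p
          simp only [Set.mem_setOf_eq, Set.mem_iUnion, Set.mem_iInter, Set.mem_preimage,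
            exists_prop]
          constructor
          · rintro ⟨τ, h1, h2⟩; exact ⟨τ, h2, h1⟩
          · rintro ⟨τ, h2, h1⟩; exact ⟨τ, h1, h2⟩
        rw [this]
        exact Set.Finite.isClosed_biUnion (Set.toFinite _) fun τ _ =>
          isClosed_iInter fun i => (isClosed_discrete _).preimage (cont1 (i, 0))
  haveI : PolishSpace ((Fin n × ℕ) → (Fin n × ℕ)) := by
    haveI : TopologicalSpace.IsCompletelyMetrizableSpace (Fin n × ℕ) := inferInstance
    haveI : TopologicalSpace.IsCompletelyMetrizableSpace ((Fin n × ℕ) → (Fin n × ℕ)) := inferInstance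
    haveI : SecondCountableTopology ((Fin n × ℕ) → (Fin n × ℕ)) := inferInstance
    infer_instance
  haveI : PolishSpace T := hemb.polishSpace
  letI := TopologicalSpace.upgradeIsCompletelyMetrizable T
  infer_instance

/-- Let n ≥ 2 and f ∈ Aut(nK_ω).  If f is stabilizing, then D_f (the
set of g with ⟨f,g⟩ dense in Aut(nK_ω)) is not dense in A_f; in particular D_f ∩ A_f
is not comeagre in A_f. -/
theorem stmt_16 (n : ℕ) (hn : 2 ≤ n) (f : nKomega n ≃g nKomega n)
    (hstab : ¬ NonStabilizing n f) :
    letI := autTop (nKomega n)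
    ¬ Dense {g : {g : nKomega n ≃g nKomega n // AfMem n f g} |
        Dense {h : nKomega n ≃g nKomega n |
          h.toEquiv ∈ Subgroup.closure
            ({f.toEquiv, g.1.toEquiv} : Set (Equiv.Perm (Fin n × ℕ)))}} ∧
      {g : {g : nKomega n ≃g nKomega n // AfMem n f g} |
        Dense {h : nKomega n ≃g nKomega n |
          h.toEquiv ∈ Subgroup.closure
            ({f.toEquiv, g.1.toEquiv} : Set (Equiv.Perm (Fin n × ℕ)))}} ∉
        residual {g : nKomega n ≃g nKomega n // AfMem n f g} := by
  letI := autTop (nKomega n)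
  haveI hB : BaireSpace {g : nKomega n ≃g nKomega n // AfMem n f g} := baire_Af n f
  unfold NonStabilizing at hstab
  push_neg at hstab
  obtain ⟨Γ, hΓ, x, hx, s, φ, ⟨g₀, hg₀s, hg₀Af⟩, hbad⟩ := hstab
  obtain ⟨y, hy⟩ := (Set.ne_univ_iff_exists_notMem Γ).mp hΓ
  have hUopen : IsOpen {g : {g : nKomega n ≃g nKomega n // AfMem n f g} |
      ∀ z ∈ s, g.1 z = φ z} :=
    (agree_open (nKomega n) s φ).preimage continuous_subtype_val
  have hND : ¬ Dense {g : {g : nKomega n ≃g nKomega n // AfMem n f g} |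
      Dense {h : nKomega n ≃g nKomega n |
        h.toEquiv ∈ Subgroup.closure
          ({f.toEquiv, g.1.toEquiv} : Set (Equiv.Perm (Fin n × ℕ)))}} := by
    intro hdense
    obtain ⟨g, hgS, hgU⟩ := hdense.exists_mem_open hUopen ⟨⟨g₀, hg₀Af⟩, hg₀s⟩
    have hVopen : IsOpen {h : nKomega n ≃g nKomega n | h x = y} := by
      have := agree_open (nKomega n) {x} (fun _ => y)
      simpa using this
    obtain ⟨h, hhS, hhV⟩ := hgS.exists_mem_open hVopen ⟨swapAut n x y, by
      simp [swapAut, Prod.map, Prod.ext_iff]⟩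
    have hmem : h x ∈ Γ := hbad g.1 hgU g.2 h.toEquiv hhS
    have hxy : h x = y := hhV
    exact hy (hxy ▸ hmem)
  exact ⟨hND, fun hres => hND (dense_of_mem_residual hres)⟩
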